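/- Wick's theorem for the Heisenberg algebra: for a product P = m₀·m₁⋯m_n·m_{n+1} of monomials in the operators a_s (where m₀ contains only a_s with s > 0 and m_{n+1} only a_s with s < 0), the vacuum expectation ⟨P⟩ equals the sum over all perfect matchings between the factors a_i (i > 0) and factors a_{−i} that appear strictly later in the product, of the product of the weights i over the matched pairs; if no such complete matching exists, ⟨P⟩ = 0. -/

import Mathlib

open MvPolynomial


/-- Heisenberg operators on the bosonic Fock space `F = ℂ[p₁,p₂,…]`. -/
noncomputable def fockOp (n : ℤ) : MvPolynomial ℕ ℂ → MvPolynomial ℕ ℂ :=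
  fun f =>
    if 0 < n then (n : ℂ) • MvPolynomial.pderiv n.toNat f
    else if n < 0 then MvPolynomial.X (-n).toNat * f
    else f

/-- The vacuum expectation `⟨a_{s₁}⋯a_{s_N}⟩`. -/
noncomputable def vacuumExp (l : List ℤ) : ℂ :=
  MvPolynomial.constantCoeff (l.foldr fockOp (1 : MvPolynomial ℕ ℂ))

lemma pderiv_comm' (i j : ℕ) (p : MvPolynomial ℕ ℂ) :
    pderiv i (pderiv j p) = pderiv j (pderiv i p) := by
  induction p using MvPolynomial.induction_on with
  | C => simp
  | add p q hp hq => simp [hp, hq]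
  | mul_X q k hq =>
    simp only [pderiv_mul, map_add, pderiv_X, hq, Pi.single_apply]
    split_ifs <;> simp <;> ring

lemma fockOp_add (n : ℤ) (f g : MvPolynomial ℕ ℂ) : fockOp n (f + g) = fockOp n f + fockOp n g := by
  unfold fockOp; split_ifs <;> simp [mul_add, smul_add]

lemma fockOp_smul (n : ℤ) (c : ℂ) (f : MvPolynomial ℕ ℂ) : fockOp n (c • f) = c • fockOp n f := by
  unfold fockOp; split_ifs <;> simp [smul_comm c, mul_smul_comm]

lemma fockOp_zero (n : ℤ) : fockOp n 0 = 0 := by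
  unfold fockOp; split_ifs <;> simp

lemma fockOp_comm {n : ℤ} (hn : 0 < n) (m : ℤ) (f : MvPolynomial ℕ ℂ) :
    fockOp n (fockOp m f) = fockOp m (fockOp n f) + (if m = -n then (n : ℂ) • f else 0) := by
  rcases lt_trichotomy m 0 with hm | hm | hm
  · unfold fockOp
    rw [if_pos hn, if_pos hn, if_neg (by omega), if_pos hm, if_neg (by omega), if_pos hm]
    rcases eq_or_ne m (-n) with rfl | hmn
    · rw [if_pos rfl, neg_neg, pderiv_mul, pderiv_X_self, one_mul, smul_add, mul_smul_comm,
        add_comm]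
    · rw [if_neg hmn, add_zero, pderiv_mul, pderiv_X_of_ne, zero_mul, zero_add, mul_smul_comm]
      intro h
      have : (-m).toNat = n.toNat := h
      omega
  · subst hm
    simp [fockOp, hn, show ¬(0:ℤ) < 0 by omega, show (0:ℤ) ≠ -n by omega]
  · unfold fockOp
    rw [if_pos hn, if_pos hm, if_pos hn, if_pos hm, if_neg (by omega), add_zero]
    rw [(pderiv n.toNat).map_smul, (pderiv m.toNat).map_smul, pderiv_comm', smul_comm]

lemma fockOp_sum (m : ℤ) {ι : Type*} (s : Finset ι) (g : ι → MvPolynomial ℕ ℂ) :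
    fockOp m (∑ j ∈ s, g j) = ∑ j ∈ s, fockOp m (g j) := by
  classical
  induction s using Finset.induction with
  | empty => simp [fockOp_zero]
  | insert _ _ h ih => rw [Finset.sum_insert h, Finset.sum_insert h, fockOp_add, ih]

lemma foldr_fockOp_zero (l : List ℤ) : l.foldr fockOp 0 = 0 := by
  induction l with
  | nil => rfl
  | cons m t ih => simp [ih, fockOp_zero]

lemma fockOp_move {n : ℤ} (hn : 0 < n) (l : List ℤ) (f : MvPolynomial ℕ ℂ) :
    fockOp n (l.foldr fockOp f) = l.foldr fockOp (fockOp n f) +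
      ∑ j ∈ Finset.range l.length,
        if l.getD j 0 = -n then (n : ℂ) • ((l.eraseIdx j).foldr fockOp f) else 0 := by
  induction l generalizing f with
  | nil => simp
  | cons m t ih =>
    simp only [List.foldr_cons]
    rw [fockOp_comm hn m, ih f, fockOp_add, fockOp_sum]
    rw [List.length_cons, Finset.sum_range_succ']
    simp only [List.getD_cons_succ, List.getD_cons_zero, List.eraseIdx_cons_succ,
      List.eraseIdx_cons_zero, List.foldr_cons]
    rw [add_assoc]
    congr 1
    congr 1
    apply Finset.sum_congr rfl
    intro j hj
    split_ifs with h
    · rw [fockOp_smul]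
    · exact fockOp_zero m

lemma vacuumExp_cons_pos {n : ℤ} (hn : 0 < n) (l : List ℤ) :
    vacuumExp (n :: l) = ∑ j ∈ Finset.range l.length,
      if l.getD j 0 = -n then (n : ℂ) * vacuumExp (l.eraseIdx j) else 0 := by
  unfold vacuumExp
  rw [List.foldr_cons, fockOp_move hn]
  have h1 : fockOp n (1 : MvPolynomial ℕ ℂ) = 0 := by
    simp [fockOp, hn]
  rw [h1, foldr_fockOp_zero, zero_add, map_sum]
  apply Finset.sum_congr rfl
  intro j hj
  split_ifs with h
  · rw [MvPolynomial.smul_eq_C_mul, map_mul, MvPolynomial.constantCoeff_C]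
  · simp

lemma vacuumExp_cons_neg {n : ℤ} (hn : n < 0) (l : List ℤ) : vacuumExp (n :: l) = 0 := by
  unfold vacuumExp
  rw [List.foldr_cons]
  have : fockOp n (l.foldr fockOp 1) = MvPolynomial.X (-n).toNat * (l.foldr fockOp 1) := by
    simp [fockOp, hn, show ¬ 0 < n by omega]
  rw [this, map_mul]
  simp


-- embedding Fin M → Fin (M+2) skipping 0 and j.succ
def emb {M : ℕ} (j : Fin (M+1)) (i : Fin M) : Fin (M+2) := (j.succAbove i).succ

lemma emb_strictMono {M : ℕ} (j : Fin (M+1)) : StrictMono (emb j) :=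
  fun _ _ h => Fin.succ_lt_succ_iff.mpr (Fin.strictMono_succAbove j h)

lemma emb_injective {M : ℕ} (j : Fin (M+1)) : Function.Injective (emb j) :=
  (emb_strictMono j).injective

lemma emb_ne_zero {M : ℕ} (j : Fin (M+1)) (i : Fin M) : emb j i ≠ 0 := Fin.succ_ne_zero _

lemma emb_ne_succ {M : ℕ} (j : Fin (M+1)) (i : Fin M) : emb j i ≠ j.succ :=
  fun h => Fin.succAbove_ne j i (Fin.succ_injective _ h)

lemma emb_surj {M : ℕ} (j : Fin (M+1)) (x : Fin (M+2)) (h1 : x ≠ 0) (h2 : x ≠ j.succ) :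
    ∃ i, emb j i = x := by
  obtain ⟨k, rfl⟩ : ∃ k : Fin (M+1), k.succ = x := ⟨x.pred h1, Fin.succ_pred x h1⟩
  have hk : k ≠ j := fun h => h2 (by rw [h])
  obtain ⟨i, hi⟩ := Fin.exists_succAbove_eq hk
  exact ⟨i, by rw [emb, hi]⟩

noncomputable def invEmb {M : ℕ} (j : Fin (M+1)) (x : Fin (M+2)) (h1 : x ≠ 0) (h2 : x ≠ j.succ) :
    Fin M := (emb_surj j x h1 h2).choose

@[simp] lemma emb_invEmb {M : ℕ} (j : Fin (M+1)) (x : Fin (M+2)) (h1 h2) :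
    emb j (invEmb j x h1 h2) = x := (emb_surj j x h1 h2).choose_spec

@[simp] lemma invEmb_emb {M : ℕ} (j : Fin (M+1)) (i : Fin M) (h1 h2) :
    invEmb j (emb j i) h1 h2 = i := emb_injective j (by rw [emb_invEmb])

lemma eraseIdx_ofFn {α : Type*} {K : ℕ} (f : Fin (K+1) → α) (j : Fin (K+1)) :
    (List.ofFn f).eraseIdx j = List.ofFn (f ∘ j.succAbove) := by
  apply List.ext_getElem
  · simp [List.length_eraseIdx]; exact Nat.le_of_lt_succ j.isLt
  · intro i h1 h2
    simp only [List.length_ofFn] at h2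
    rw [List.getElem_eraseIdx]
    split_ifs with h hlen
    · rw [List.getElem_ofFn, List.getElem_ofFn]
      show f _ = f (j.succAbove _)
      congr 1
      have : j.succAbove ⟨i,h2⟩ = Fin.castSucc ⟨i,h2⟩ := by
        apply Fin.succAbove_of_castSucc_lt; simpa [Fin.lt_def] using h
      rw [this]; exact Fin.ext rfl
    · rw [List.getElem_ofFn, List.getElem_ofFn]
      show f _ = f (j.succAbove _)
      congr 1
      have : j.succAbove ⟨i,h2⟩ = Fin.succ ⟨i,h2⟩ := by
        apply Fin.succAbove_of_le_castSucc; simp only [Fin.le_def, Fin.coe_castSucc]; omega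
      rw [this]; exact Fin.ext rfl

def Matchings {α : Type*} [LinearOrder α] (s : α → ℤ) : Type _ :=
  {e : {i : α // 0 < s i} ≃ {i : α // s i < 0} //
    ∀ i : {i : α // 0 < s i},
      ((i : α) < ((e i : {i : α // s i < 0}) : α)) ∧
        s ((e i : {i : α // s i < 0}) : α) = - s (i : α)}

instance matchingsFinite {α : Type*} [LinearOrder α] [Finite α] (s : α → ℤ) :
    Finite (Matchings s) := by
  unfold Matchings; infer_instance

abbrev sP {M : ℕ} (s : Fin (M+2) → ℤ) (j : Fin (M+1)) : Fin M → ℤ := fun i => s (emb j i)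

section
variable {M : ℕ} {s : Fin (M+2) → ℤ} {j : Fin (M+1)}

lemma negIdx_ne_zero (h0 : 0 < s 0) (b : {i : Fin (M+2) // s i < 0}) : (b : Fin (M+2)) ≠ 0 := by
  intro h
  have hb := b.2
  rw [h] at hb
  exact absurd hb (not_lt.mpr h0.le)

lemma pos_ne_succ (hj : s j.succ = - s 0) (h0 : 0 < s 0) (a : {i : Fin (M+2) // 0 < s i}) :
    (a : Fin (M+2)) ≠ j.succ := by
  intro h
  have ha := a.2
  rw [h, hj] at ha
  omega

noncomputable def fwdFun (h0 : 0 < s 0) (E : Matchings s)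
    (hE : ((E.1 ⟨0, h0⟩ : {i : Fin (M+2) // s i < 0}) : Fin (M+2)) = j.succ)
    (i' : {i : Fin M // 0 < sP s j i}) : {i : Fin M // sP s j i < 0} :=
  ⟨invEmb j (E.1 ⟨emb j i', i'.2⟩ : {i : Fin (M+2) // s i < 0})
    (negIdx_ne_zero h0 _)
    (by
      intro h
      have : E.1 ⟨emb j i', i'.2⟩ = E.1 ⟨0, h0⟩ := Subtype.ext (by rw [h, hE])
      have h2 : (⟨emb j i', i'.2⟩ : {i : Fin (M+2) // 0 < s i}) = ⟨0, h0⟩ := E.1.injective this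
      exact emb_ne_zero j i' (congrArg Subtype.val h2)),
   by
    show sP s j _ < 0
    unfold sP
    rw [emb_invEmb]
    exact (E.1 ⟨emb j i', i'.2⟩).2⟩

lemma fwdFun_bijective (h0 : 0 < s 0) (E : Matchings s) (hE) :
    Function.Bijective (fwdFun (j := j) h0 E hE) := by
  have hj : s j.succ = - s 0 := by rw [← hE]; exact (E.2 ⟨0, h0⟩).2
  constructor
  · intro a b hab
    have h1 : emb j ((fwdFun h0 E hE a : Fin M)) = emb j ((fwdFun h0 E hE b : Fin M)) := by
      rw [hab]
    rw [fwdFun, fwdFun, emb_invEmb, emb_invEmb] at h1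
    have := E.1.injective (Subtype.ext h1)
    have := congrArg Subtype.val this
    exact Subtype.ext (emb_injective j this)
  · intro b'
    set b : {i : Fin (M+2) // s i < 0} := ⟨emb j b', b'.2⟩ with hbdef
    set a := E.1.symm b with hadef
    have hEa : E.1 a = b := E.1.apply_symm_apply b
    have ha0 : (a : Fin (M+2)) ≠ 0 := by
      intro h
      have h2 : (E.1 a : Fin (M+2)) = j.succ := by
        rw [show a = (⟨0, h0⟩ : {i : Fin (M+2) // 0 < s i}) from Subtype.ext h, hE]
      rw [hEa] at h2
      exact emb_ne_succ j b' h2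
    have haj : (a : Fin (M+2)) ≠ j.succ := pos_ne_succ hj h0 a
    refine ⟨⟨invEmb j a ha0 haj, by show 0 < s (emb j _); rw [emb_invEmb]; exact a.2⟩, ?_⟩
    apply Subtype.ext
    apply emb_injective j
    simp only [fwdFun, emb_invEmb]
    have h5 : ∀ (z : {i : Fin (M+2) // 0 < s i}), z = a → ((E.1 z : {i : Fin (M+2) // s i < 0}) : Fin (M+2)) = emb j b' := by
      intro z hz
      rw [hz, hEa]
    exact h5 _ (Subtype.ext rfl)

noncomputable def fwdEquiv (h0 : 0 < s 0) (E : Matchings s)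
    (hE : ((E.1 ⟨0, h0⟩ : {i : Fin (M+2) // s i < 0}) : Fin (M+2)) = j.succ) :
    Matchings (sP s j) := by
  refine ⟨Equiv.ofBijective _ (fwdFun_bijective h0 E hE), ?_⟩
  intro i'
  show ((i' : Fin M) < (fwdFun h0 E hE i' : Fin M)) ∧ sP s j ((fwdFun h0 E hE i' : Fin M)) = - sP s j i'
  have key : emb j ((fwdFun h0 E hE i' : Fin M)) = ((E.1 ⟨emb j i', i'.2⟩ : {i : Fin (M+2) // s i < 0}) : Fin (M+2)) := by
    rw [fwdFun, emb_invEmb]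
  constructor
  · rw [← (emb_strictMono j).lt_iff_lt, key]
    exact (E.2 ⟨emb j i', i'.2⟩).1
  · show s (emb j _) = - s (emb j _)
    rw [key]
    exact (E.2 ⟨emb j i', i'.2⟩).2


noncomputable def bwdFun (h0 : 0 < s 0) (hj : s j.succ = - s 0) (E' : Matchings (sP s j))
    (a : {i : Fin (M+2) // 0 < s i}) : {i : Fin (M+2) // s i < 0} :=
  if h : (a : Fin (M+2)) = 0 then
    ⟨j.succ, by rw [hj]; omega⟩
  else
    ⟨emb j (E'.1 ⟨invEmb j a h (pos_ne_succ hj h0 a),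
        by show 0 < s (emb j _); rw [emb_invEmb]; exact a.2⟩ : {i : Fin M // sP s j i < 0}),
      (E'.1 _).2⟩

lemma bwdFun_zero (h0 : 0 < s 0) (hj : s j.succ = - s 0) (E' : Matchings (sP s j)) :
    ((bwdFun h0 hj E' ⟨0, h0⟩ : {i : Fin (M+2) // s i < 0}) : Fin (M+2)) = j.succ := by
  rw [bwdFun, dif_pos rfl]

lemma bwdFun_ne (h0 : 0 < s 0) (hj : s j.succ = - s 0) (E' : Matchings (sP s j))
    (a : {i : Fin (M+2) // 0 < s i}) (h : (a : Fin (M+2)) ≠ 0) :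
    ((bwdFun h0 hj E' a : {i : Fin (M+2) // s i < 0}) : Fin (M+2)) =
      emb j (E'.1 ⟨invEmb j a h (pos_ne_succ hj h0 a),
        by show 0 < s (emb j _); rw [emb_invEmb]; exact a.2⟩ : {i : Fin M // sP s j i < 0}) := by
  rw [bwdFun, dif_neg h]

lemma bwdFun_bijective (h0 : 0 < s 0) (hj : s j.succ = - s 0) (E' : Matchings (sP s j)) :
    Function.Bijective (bwdFun h0 hj E') := by
  constructor
  · intro a b hab
    by_cases ha : (a : Fin (M+2)) = 0 <;> by_cases hb : (b : Fin (M+2)) = 0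
    · exact Subtype.ext (ha.trans hb.symm)
    · exfalso
      have h1 := congrArg Subtype.val hab
      rw [bwdFun_ne h0 hj E' b hb] at h1
      rw [show a = (⟨0,h0⟩ : {i : Fin (M+2) // 0 < s i}) from Subtype.ext ha] at h1
      rw [bwdFun_zero h0 hj E'] at h1
      exact emb_ne_succ j _ h1.symm
    · exfalso
      have h1 := congrArg Subtype.val hab
      rw [bwdFun_ne h0 hj E' a ha] at h1
      rw [show b = (⟨0,h0⟩ : {i : Fin (M+2) // 0 < s i}) from Subtype.ext hb] at h1
      rw [bwdFun_zero h0 hj E'] at h1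
      exact emb_ne_succ j _ h1
    · have h1 := congrArg Subtype.val hab
      rw [bwdFun_ne h0 hj E' a ha, bwdFun_ne h0 hj E' b hb] at h1
      have h2 := E'.1.injective (Subtype.ext (emb_injective j h1))
      have h3 := congrArg Subtype.val h2
      have h4 := congrArg (emb j) h3
      rw [emb_invEmb, emb_invEmb] at h4
      exact Subtype.ext h4
  · intro b
    by_cases hb : (b : Fin (M+2)) = j.succ
    · exact ⟨⟨0, h0⟩, Subtype.ext (by rw [bwdFun_zero h0 hj E', hb])⟩
    · have hb0 : (b : Fin (M+2)) ≠ 0 := negIdx_ne_zero h0 b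
      set b' : {i : Fin M // sP s j i < 0} :=
        ⟨invEmb j b hb0 hb, by show s (emb j _) < 0; rw [emb_invEmb]; exact b.2⟩ with hb'def
      set a' := E'.1.symm b' with ha'def
      have hEa' : E'.1 a' = b' := E'.1.apply_symm_apply b'
      refine ⟨⟨emb j a', a'.2⟩, ?_⟩
      apply Subtype.ext
      rw [bwdFun_ne h0 hj E' _ (emb_ne_zero j a')]
      have h5 : ∀ z : {i : Fin M // 0 < sP s j i}, z = a' → emb j ((E'.1 z : {i : Fin M // sP s j i < 0}) : Fin M) = (b : Fin (M+2)) := by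
        intro z hz
        rw [hz, hEa', hb'def, emb_invEmb]
      exact h5 _ (Subtype.ext (by simp))

noncomputable def bwdEquiv (h0 : 0 < s 0) (hj : s j.succ = - s 0) (E' : Matchings (sP s j)) :
    Matchings s := by
  refine ⟨Equiv.ofBijective _ (bwdFun_bijective h0 hj E'), ?_⟩
  intro a
  by_cases ha : (a : Fin (M+2)) = 0
  · constructor
    · show (a : Fin (M+2)) < ((bwdFun h0 hj E' a : {i : Fin (M+2) // s i < 0}) : Fin (M+2))
      rw [show a = (⟨0,h0⟩ : {i : Fin (M+2) // 0 < s i}) from Subtype.ext ha, bwdFun_zero h0 hj E']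
      exact Fin.succ_pos j
    · show s ((bwdFun h0 hj E' a : {i : Fin (M+2) // s i < 0}) : Fin (M+2)) = - s (a : Fin (M+2))
      rw [show a = (⟨0,h0⟩ : {i : Fin (M+2) // 0 < s i}) from Subtype.ext ha, bwdFun_zero h0 hj E']
      exact hj
  · have hb := bwdFun_ne h0 hj E' a ha
    set x : {i : Fin M // 0 < sP s j i} := ⟨invEmb j a ha (pos_ne_succ hj h0 a),
      by show 0 < s (emb j _); rw [emb_invEmb]; exact a.2⟩ with hxdef
    have hax : (a : Fin (M+2)) = emb j x := (emb_invEmb j a ha (pos_ne_succ hj h0 a)).symm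
    constructor
    · show (a : Fin (M+2)) < ((bwdFun h0 hj E' a : {i : Fin (M+2) // s i < 0}) : Fin (M+2))
      rw [hb, hax]
      exact (emb_strictMono j) ((E'.2 x).1)
    · show s ((bwdFun h0 hj E' a : {i : Fin (M+2) // s i < 0}) : Fin (M+2)) = - s (a : Fin (M+2))
      rw [hb, hax]
      exact (E'.2 x).2

noncomputable def fiberEquiv (h0 : 0 < s 0) (hj : s j.succ = - s 0) :
    {E : Matchings s // ((E.1 ⟨0, h0⟩ : {i : Fin (M+2) // s i < 0}) : Fin (M+2)) = j.succ} ≃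
      Matchings (sP s j) where
  toFun := fun p => fwdEquiv h0 p.1 p.2
  invFun := fun E' => ⟨bwdEquiv h0 hj E', bwdFun_zero h0 hj E'⟩
  left_inv := by
    rintro ⟨E, hE⟩
    apply Subtype.ext
    apply Subtype.ext
    apply Equiv.ext
    intro a
    show bwdFun h0 hj (fwdEquiv h0 E hE) a = E.1 a
    by_cases ha : (a : Fin (M+2)) = 0
    · apply Subtype.ext
      rw [show a = (⟨0,h0⟩ : {i : Fin (M+2) // 0 < s i}) from Subtype.ext ha,
        bwdFun_zero h0 hj _, hE]
    · apply Subtype.ext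
      rw [bwdFun_ne h0 hj _ a ha]
      show emb j ((fwdFun h0 E hE _ : Fin M)) = _
      simp only [fwdFun, emb_invEmb]
  right_inv := by
    intro E'
    apply Subtype.ext
    apply Equiv.ext
    intro i'
    show fwdFun h0 (bwdEquiv h0 hj E') (bwdFun_zero h0 hj E') i' = E'.1 i'
    apply Subtype.ext
    apply emb_injective j
    simp only [fwdFun, emb_invEmb]
    show ((bwdFun h0 hj E' ⟨emb j i', i'.2⟩ : {i : Fin (M+2) // s i < 0}) : Fin (M+2)) = _
    rw [bwdFun_ne h0 hj E' _ (emb_ne_zero j i')]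
    have h5 : ∀ z : {i : Fin M // 0 < sP s j i}, z = i' →
        emb j ((E'.1 z : {i : Fin M // sP s j i < 0}) : Fin M) =
          emb j ((E'.1 i' : {i : Fin M // sP s j i < 0}) : Fin M) := fun z hz => by rw [hz]
    exact h5 _ (Subtype.ext (invEmb_emb j i' (emb_ne_zero j i') (pos_ne_succ hj h0 ⟨emb j i', i'.2⟩)))


lemma card_matchings (h0 : 0 < s 0) :
    Nat.card (Matchings s) =
      ∑ j : Fin (M+1), if s j.succ = - s 0 then Nat.card (Matchings (sP s j)) else 0 := by
  classical
  set fib : Matchings s → Fin (M+1) :=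
    fun E => ((E.1 ⟨0, h0⟩ : {i : Fin (M+2) // s i < 0}) : Fin (M+2)).pred
      (negIdx_ne_zero h0 _) with hfib
  have h1 : Nat.card (Matchings s) = ∑ j : Fin (M+1), Nat.card {E : Matchings s // fib E = j} := by
    rw [← Nat.card_congr (Equiv.sigmaFiberEquiv fib)]
    letI : Fintype (Matchings s) := Fintype.ofFinite _
    letI : ∀ j, Fintype {E : Matchings s // fib E = j} := fun j => Fintype.ofFinite _
    rw [Nat.card_eq_fintype_card, Fintype.card_sigma]
    exact Finset.sum_congr rfl (fun j _ => (Nat.card_eq_fintype_card).symm)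
  rw [h1]
  apply Finset.sum_congr rfl
  intro j _
  have hfibiff : ∀ E : Matchings s, fib E = j ↔
      ((E.1 ⟨0, h0⟩ : {i : Fin (M+2) // s i < 0}) : Fin (M+2)) = j.succ := by
    intro E
    rw [hfib]
    constructor
    · intro h; rw [← h, Fin.succ_pred]
    · intro h; simp [h]
  by_cases hj : s j.succ = - s 0
  · rw [if_pos hj]
    exact Nat.card_congr ((Equiv.subtypeEquivRight hfibiff).trans (fiberEquiv h0 hj))
  · rw [if_neg hj]
    have : IsEmpty {E : Matchings s // fib E = j} := by
      constructor
      rintro ⟨E, hE⟩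
      rw [hfibiff E] at hE
      exact hj (by rw [← hE]; exact (E.2 ⟨0, h0⟩).2)
    simp

lemma prod_pos_split (h0 : 0 < s 0) (hj : s j.succ = - s 0) :
    ∏ i : {i : Fin (M+2) // 0 < s i}, (s (i : Fin (M+2)) : ℂ) =
      (s 0 : ℂ) * ∏ i : {i : Fin M // 0 < sP s j i}, (sP s j (i : Fin M) : ℂ) := by
  classical
  have e1 : ∏ i : {i : Fin (M+2) // 0 < s i}, (s (i : Fin (M+2)) : ℂ) =
      ∏ i ∈ Finset.univ.filter (fun i => 0 < s i), (s i : ℂ) :=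
    (Finset.prod_subtype (Finset.univ.filter (fun i => 0 < s i)) (fun x => by simp)
      (fun i => ((s i : ℂ)))).symm
  have e2 : ∏ i : {i : Fin M // 0 < sP s j i}, (sP s j (i : Fin M) : ℂ) =
      ∏ i ∈ Finset.univ.filter (fun i : Fin M => 0 < sP s j i), (sP s j i : ℂ) :=
    (Finset.prod_subtype (Finset.univ.filter (fun i : Fin M => 0 < sP s j i)) (fun x => by simp)
      (fun i => ((sP s j i : ℂ)))).symm
  rw [e1, e2]
  have hA : Finset.univ.filter (fun i => 0 < s i) =
      insert (0 : Fin (M+2))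
        ((Finset.univ.filter (fun i : Fin M => 0 < sP s j i)).image (emb j)) := by
    ext x
    simp only [Finset.mem_filter, Finset.mem_univ, true_and, Finset.mem_insert,
      Finset.mem_image]
    constructor
    · intro hx
      by_cases hx0 : x = 0
      · exact Or.inl hx0
      · right
        have hxj : x ≠ j.succ := by
          intro h; rw [h, hj] at hx; omega
        obtain ⟨i, hi⟩ := emb_surj j x hx0 hxj
        refine ⟨i, ?_, hi⟩
        show 0 < s (emb j i)
        rw [hi]
        exact hx
    · rintro (rfl | ⟨i, hi, rfl⟩)
      · exact h0
      · exact hi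
  rw [hA, Finset.prod_insert (by
      simp only [Finset.mem_image]
      rintro ⟨i, _, hi⟩
      exact emb_ne_zero j i hi),
    Finset.prod_image (by intro a _ b _ h; exact emb_injective j h)]

end

lemma matchings_empty_of_neg_zero {K : ℕ} {s : Fin (K+1) → ℤ} (hneg : s 0 < 0) :
    IsEmpty (Matchings s) := by
  constructor
  intro E
  set b : {i : Fin (K+1) // s i < 0} := ⟨0, hneg⟩ with hb
  have h1 := (E.2 (E.1.symm b)).1
  rw [E.1.apply_symm_apply] at h1
  exact absurd h1 (Fin.not_lt_zero _)

lemma wick_key (N : ℕ) : ∀ (s : Fin N → ℤ), (∀ i, s i ≠ 0) →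
    vacuumExp (List.ofFn s) =
      (Nat.card (Matchings s) : ℂ) * ∏ i : {i : Fin N // 0 < s i}, (s (i : Fin N) : ℂ) := by
  induction N using Nat.strong_induction_on with
  | _ N ih =>
  obtain _ | N := N
  · intro s hs
    haveI hP : IsEmpty {i : Fin 0 // 0 < s i} := ⟨fun i => i.1.elim0⟩
    haveI hN : IsEmpty {i : Fin 0 // s i < 0} := ⟨fun i => i.1.elim0⟩
    haveI : Subsingleton (Matchings s) := by
      constructor
      intro a b
      apply Subtype.ext
      apply Equiv.ext
      intro i
      exact isEmptyElim i
    haveI : Unique (Matchings s) :=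
      uniqueOfSubsingleton ⟨Equiv.equivOfIsEmpty _ _, fun i => isEmptyElim i⟩
    rw [Nat.card_unique]
    simp [vacuumExp, List.ofFn_zero]
  intro s hs
  rcases lt_or_gt_of_ne (hs 0) with hneg | hpos
  · haveI := matchings_empty_of_neg_zero hneg
    rw [List.ofFn_succ, vacuumExp_cons_neg hneg]
    simp
  · obtain _ | M := N
    · -- N = 1
      haveI : IsEmpty (Matchings s) := by
        constructor
        intro E
        have := (E.1 ⟨0, hpos⟩).2
        have h1 : (E.1 ⟨0, hpos⟩ : {i : Fin 1 // s i < 0}).1 = 0 :=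
          Fin.ext (Nat.lt_one_iff.mp ((E.1 ⟨0, hpos⟩ : {i : Fin 1 // s i < 0}) : Fin 1).isLt)
        rw [h1] at this
        omega
      rw [List.ofFn_succ, vacuumExp_cons_pos hpos]
      simp
    · -- N = M + 2
      have step : vacuumExp (List.ofFn s) =
          ∑ j : Fin (M+1), if s j.succ = - s 0 then
            (s 0 : ℂ) * vacuumExp (List.ofFn (sP s j)) else 0 := by
        rw [List.ofFn_succ, vacuumExp_cons_pos hpos, List.length_ofFn,
          ← Fin.sum_univ_eq_sum_range]
        apply Finset.sum_congr rfl
        intro j _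
        have hgetD : (List.ofFn (fun i : Fin (M+1) => s i.succ)).getD (j:ℕ) 0 = s j.succ := by
          rw [List.getD_eq_getElem _ _ (by simp; exact Nat.le_of_lt_succ j.isLt), List.getElem_ofFn]
        have herase : (List.ofFn (fun i : Fin (M+1) => s i.succ)).eraseIdx (j:ℕ) =
            List.ofFn (sP s j) := by
          rw [eraseIdx_ofFn]
          rfl
        rw [hgetD, herase]
      rw [step, card_matchings hpos, Nat.cast_sum, Finset.sum_mul]
      apply Finset.sum_congr rfl
      intro j _
      by_cases hj : s j.succ = - s 0
      · rw [if_pos hj, if_pos hj, ih M (by omega) (sP s j) (fun i => hs (emb j i)),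
          prod_pos_split hpos hj]
        ring
      · rw [if_neg hj, if_neg hj, Nat.cast_zero, zero_mul]


/-- Wick's theorem: for a product `P = a_{s₁}⋯a_{s_N}` of Heisenberg operators
(`sᵢ ≠ 0`), the vacuum expectation `⟨P⟩` equals the sum, over all perfect matchings
pairing each factor `a_i` with `i > 0` to a factor `a_{−i}` occurring strictly later
in the product, of the product of the weights `i` of the matched pairs; in
particular `⟨P⟩ = 0` if no such complete matching exists. -/
theorem wick_theorem (N : ℕ) (s : Fin N → ℤ) (hs : ∀ i, s i ≠ 0) :
    vacuumExp (List.ofFn s) =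
      ∑ᶠ (_ : {e : {i : Fin N // 0 < s i} ≃ {i : Fin N // s i < 0} //
          ∀ i : {i : Fin N // 0 < s i},
            (i : Fin N) < ((e i : {i : Fin N // s i < 0}) : Fin N) ∧
              s ((e i : {i : Fin N // s i < 0}) : Fin N) = - s (i : Fin N)}),
        ∏ i : {i : Fin N // 0 < s i}, (s (i : Fin N) : ℂ) := by
  classical
  letI : Fintype (Matchings s) := Fintype.ofFinite _
  show vacuumExp (List.ofFn s) =
    ∑ᶠ (_ : Matchings s), ∏ i : {i : Fin N // 0 < s i}, (s (i : Fin N) : ℂ)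
  rw [finsum_eq_sum_of_fintype, Finset.sum_const, Finset.card_univ, nsmul_eq_mul,
    ← Nat.card_eq_fintype_card]
  exact wick_key N s hs
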